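/- For semi-implicit methods and q ≥ 1/2, the maximum growth functions are: max{𝔥_s(τ): ρ(τ)≤q} = ⌊q+1/2⌋ for simple iterations, max{𝔯_s(τ): ρ(τ)≤q} = ⌊(2/3)(q+1)⌋ for modified Newton iterations, and max{𝔡_s(τ): ρ(τ)≤q} = ⌊log₂((q+1)/3)⌋ + 2 for full Newton iterations. -/

import Mathlib

inductive CTree (m : ℕ) : Type
  | node : Fin (m + 1) → List (CTree m) → CTree m

namespace CTree

variable {m : ℕ}

def rho : CTree m → ℚ
  | .node l ts => (if (l : ℕ) = 0 then 1 else 1/2) + (ts.attach.map (fun t => rho t.1)).sum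
decreasing_by
  all_goals try simp only [CTree.node.sizeOf_spec, List.cons.sizeOf_spec, List.nil.sizeOf_spec]
  all_goals try have := List.sizeOf_lt_of_mem t.2
  all_goals omega

def height : CTree m → ℕ
  | .node _ ts => 1 + (ts.attach.map (fun t => height t.1)).foldr max 0
decreasing_by
  all_goals try simp only [CTree.node.sizeOf_spec, List.cons.sizeOf_spec, List.nil.sizeOf_spec]
  all_goals try have := List.sizeOf_lt_of_mem t.2
  all_goals omega

def ram : CTree m → ℕ
  | .node _ [] => 1
  | .node _ [t] => ram t
  | .node _ ts => 1 + (ts.attach.map (fun t => ram t.1)).foldr max 0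
decreasing_by
  all_goals try simp only [CTree.node.sizeOf_spec, List.cons.sizeOf_spec, List.nil.sizeOf_spec]
  all_goals try have := List.sizeOf_lt_of_mem t.2
  all_goals omega

def dbl : CTree m → ℕ
  | .node _ [] => 1
  | .node _ ts =>
      let ds := ts.attach.map (fun t => dbl t.1)
      let M := ds.foldr max 0
      if 2 ≤ ds.count M then M + 1 else M
decreasing_by
  all_goals try simp only [CTree.node.sizeOf_spec, List.cons.sizeOf_spec, List.nil.sizeOf_spec]
  all_goals try have := List.sizeOf_lt_of_mem t.2
  all_goals omega


/-- semi-implicit height-type growth function 𝔥ₛ -/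
def hs : CTree m → ℕ
  | .node l ts => if 0 < (l : ℕ) then 1 else 1 + (ts.attach.map (fun t => hs t.1)).foldr max 0
decreasing_by
  all_goals try simp only [CTree.node.sizeOf_spec, List.cons.sizeOf_spec, List.nil.sizeOf_spec]
  all_goals try have := List.sizeOf_lt_of_mem t.2
  all_goals omega

/-- semi-implicit ramification-type growth function 𝔯ₛ -/
def rs : CTree m → ℕ
  | .node _ [] => 1
  | .node l [t] => if 0 < (l : ℕ) then 1 else rs t
  | .node l ts => if 0 < (l : ℕ) then 1 else 1 + (ts.attach.map (fun t => rs t.1)).foldr max 0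
decreasing_by
  all_goals try simp only [CTree.node.sizeOf_spec, List.cons.sizeOf_spec, List.nil.sizeOf_spec]
  all_goals try have := List.sizeOf_lt_of_mem t.2
  all_goals omega

/-- semi-implicit doubling-type growth function 𝔡ₛ -/
def dsm : CTree m → ℕ
  | .node _ [] => 1
  | .node l ts =>
      if 0 < (l : ℕ) then 1 else
      let vals := ts.attach.map (fun t => dsm t.1)
      let M := vals.foldr max 0
      if 2 ≤ vals.count M then M + 1 else M
decreasing_by
  all_goals try simp only [CTree.node.sizeOf_spec, List.cons.sizeOf_spec, List.nil.sizeOf_spec]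
  all_goals try have := List.sizeOf_lt_of_mem t.2
  all_goals omega


end CTree
namespace CTree
variable {m : ℕ}

theorem myInd {P : CTree m → Prop}
    (h : ∀ l ts, (∀ t ∈ ts, P t) → P (node l ts)) : ∀ t, P t
  | node l ts => h l ts (fun t ht => myInd h t)
decreasing_by
  have := List.sizeOf_lt_of_mem ht
  simp only [CTree.node.sizeOf_spec]; omega

theorem rho_node (l : Fin (m+1)) (ts : List (CTree m)) :
    rho (node l ts) = (if (l : ℕ) = 0 then 1 else 1/2) + (ts.map rho).sum := by
  rw [rho, List.attach_map_val]

theorem hs_node (l : Fin (m+1)) (ts : List (CTree m)) :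
    hs (node l ts) = if 0 < (l : ℕ) then 1 else 1 + (ts.map hs).foldr max 0 := by
  rw [hs, List.attach_map_val]

theorem rs_nil (l : Fin (m+1)) : rs (node l ([] : List (CTree m))) = 1 := by rw [rs]

theorem rs_one (l : Fin (m+1)) (t : CTree m) :
    rs (node l [t]) = if 0 < (l : ℕ) then 1 else rs t := by rw [rs]

theorem rs_two (l : Fin (m+1)) (a b : CTree m) (ts : List (CTree m)) :
    rs (node l (a :: b :: ts)) =
      if 0 < (l : ℕ) then 1 else 1 + ((a::b::ts).map rs).foldr max 0 := by
  rw [rs, List.attach_map_val] <;> simp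

theorem dsm_nil (l : Fin (m+1)) : dsm (node l ([] : List (CTree m))) = 1 := by rw [dsm]

theorem dsm_cons (l : Fin (m+1)) (a : CTree m) (ts : List (CTree m)) :
    dsm (node l (a :: ts)) =
      if 0 < (l : ℕ) then 1 else
      let vals := (a::ts).map dsm
      let M := vals.foldr max 0
      if 2 ≤ vals.count M then M + 1 else M := by
  rw [dsm, List.attach_map_val] <;> simp

theorem half_le_rho : ∀ t : CTree m, 1/2 ≤ rho t := by
  refine myInd (fun l ts ih => ?_)
  rw [rho_node]
  have h0 : (0:ℚ) ≤ (ts.map rho).sum := by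
    apply List.sum_nonneg
    intro x hx
    obtain ⟨t, ht, rfl⟩ := List.mem_map.mp hx
    linarith [ih t ht]
  split <;> linarith

theorem rho_nonneg (t : CTree m) : 0 ≤ rho t := le_trans (by norm_num) (half_le_rho t)

theorem sum_rho_nonneg (ts : List (CTree m)) : 0 ≤ (ts.map rho).sum := by
  apply List.sum_nonneg
  intro x hx
  obtain ⟨t, ht, rfl⟩ := List.mem_map.mp hx
  exact rho_nonneg t

theorem rho_mem_le {ts : List (CTree m)} {t : CTree m} (ht : t ∈ ts) :
    rho t ≤ (ts.map rho).sum :=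
  List.single_le_sum (by intro x hx; obtain ⟨u, hu, rfl⟩ := List.mem_map.mp hx; exact rho_nonneg u)
    _ (List.mem_map.mpr ⟨t, ht, rfl⟩)

theorem foldr_max_cases (l : List ℕ) : l.foldr max 0 = 0 ∨ l.foldr max 0 ∈ l := by
  induction l with
  | nil => simp
  | cons a l ih =>
    simp only [List.foldr_cons]
    rcases ih with h | h
    · rcases Nat.eq_zero_or_pos a with rfl | ha
      · left; simp [h]
      · right; rw [max_eq_left (by omega)]; exact List.mem_cons_self
    · rcases le_or_gt a (l.foldr max 0) with h2 | h2
      · right; rw [max_eq_right h2]; exact List.mem_cons_of_mem _ h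
      · right; rw [max_eq_left (le_of_lt h2)]; exact List.mem_cons_self

theorem foldr_max_le {l : List ℕ} {B : ℕ} (h : ∀ x ∈ l, x ≤ B) : l.foldr max 0 ≤ B := by
  induction l with
  | nil => simp
  | cons a l ih => simp only [List.foldr_cons, max_le_iff]
                   exact ⟨h a (by simp), ih fun x hx => h x (List.mem_cons_of_mem _ hx)⟩

theorem le_foldr_max {l : List ℕ} {x : ℕ} (h : x ∈ l) : x ≤ l.foldr max 0 := by
  induction l with
  | nil => simp at h
  | cons a l ih =>
    simp only [List.foldr_cons]
    rcases List.mem_cons.mp h with rfl | h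
    · exact le_max_left _ _
    · exact le_trans (ih h) (le_max_right _ _)

end CTree
namespace CTree
variable {m : ℕ}

theorem one_le_hs : ∀ t : CTree m, 1 ≤ hs t := by
  refine myInd (fun l ts _ => ?_)
  rw [hs_node]; split <;> omega

theorem one_le_rs : ∀ t : CTree m, 1 ≤ rs t := by
  refine myInd (fun l ts ih => ?_)
  match ts with
  | [] => rw [rs_nil]
  | [t] => rw [rs_one]; split; · exact le_refl 1
           · exact ih t (by simp)
  | a :: b :: ts => rw [rs_two]; split <;> omega

theorem one_le_dsm : ∀ t : CTree m, 1 ≤ dsm t := by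
  refine myInd (fun l ts ih => ?_)
  match ts with
  | [] => rw [dsm_nil]
  | a :: ts =>
    rw [dsm_cons]
    split
    · exact le_refl 1
    · simp only
      have h1 : 1 ≤ dsm a := ih a (by simp)
      have h2 : dsm a ≤ ((a::ts).map dsm).foldr max 0 := le_foldr_max (by simp)
      split <;> omega

theorem hs_le : ∀ t : CTree m, (hs t : ℚ) ≤ rho t + 1/2 := by
  refine myInd (fun l ts ih => ?_)
  rw [hs_node, rho_node]
  have hsum := sum_rho_nonneg ts
  split
  · rename_i h
    rw [if_neg (by omega)]
    push_cast; linarith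
  · rename_i h
    rw [if_pos (by omega)]
    rcases foldr_max_cases (ts.map hs) with h0 | hmem
    · rw [h0]; push_cast; linarith
    · obtain ⟨t, ht, hval⟩ := List.mem_map.mp hmem
      have := ih t ht
      have := rho_mem_le ht
      rw [← hval]; push_cast; linarith

theorem rs_le : ∀ t : CTree m, 3 * (rs t : ℚ) ≤ 2 * rho t + 2 := by
  refine myInd (fun l ts ih => ?_)
  match ts with
  | [] =>
    rw [rs_nil, rho_node]
    split <;> push_cast <;> norm_num
  | [t] =>
    rw [rs_one, rho_node]
    have h1 := half_le_rho t
    split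
    · rename_i h
      rw [if_neg (by omega)]
      push_cast; simp; linarith
    · rename_i h
      rw [if_pos (by omega)]
      have := ih t (by simp)
      push_cast; simp; linarith
  | a :: b :: ts =>
    rw [rs_two, rho_node]
    have ha := half_le_rho a
    have hb := half_le_rho b
    have hrest := sum_rho_nonneg ts
    split
    · rename_i h
      rw [if_neg (by omega)]
      push_cast [List.map_cons, List.sum_cons]; linarith
    · rename_i h
      rw [if_pos (by omega)]
      rcases foldr_max_cases ((a::b::ts).map rs) with h0 | hmem
      · rw [h0]; push_cast [List.map_cons, List.sum_cons]; linarith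
      · obtain ⟨t, ht, hval⟩ := List.mem_map.mp hmem
        have hih := ih t ht
        rw [← hval]
        rcases List.mem_cons.mp ht with rfl | ht'
        · push_cast [List.map_cons, List.sum_cons]; linarith
        rcases List.mem_cons.mp ht' with rfl | ht''
        · push_cast [List.map_cons, List.sum_cons]; linarith
        · have := rho_mem_le ht''
          push_cast [List.map_cons, List.sum_cons]; linarith

theorem sum_two {M : ℕ} : ∀ (l : List (CTree m)),
    (∀ t ∈ l, 3 * (2:ℚ) ^ dsm t ≤ 4 * rho t + 4) →
    2 ≤ (l.map dsm).count M →
    2 * (3 * (2:ℚ) ^ M - 4) ≤ 4 * (l.map rho).sum := by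
  intro l
  induction l with
  | nil => intro _ h; simp at h
  | cons a l ih =>
    intro hIH hc
    rw [List.map_cons, List.count_cons] at hc
    rw [List.map_cons, List.sum_cons]
    by_cases ha : dsm a = M
    · -- count in l ≥ 1, so ∃ b ∈ l with dsm b = M
      have hc1 : 1 ≤ (l.map dsm).count M := by
        split at hc <;> omega
      have hmem : M ∈ l.map dsm := List.count_pos_iff.mp (by omega)
      obtain ⟨b, hb, hbv⟩ := List.mem_map.mp hmem
      have h1 : 3 * (2:ℚ) ^ M ≤ 4 * rho a + 4 := by rw [← ha]; exact hIH a (by simp)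
      have h2 : 3 * (2:ℚ) ^ M ≤ 4 * rho b + 4 := by rw [← hbv]; exact hIH b (List.mem_cons_of_mem _ hb)
      have h3 : rho b ≤ (l.map rho).sum := rho_mem_le hb
      linarith
    · have hc2 : 2 ≤ (l.map dsm).count M := by
        simp [ha] at hc; omega
      have := ih (fun t ht => hIH t (List.mem_cons_of_mem _ ht)) hc2
      have := rho_nonneg a
      linarith

theorem dsm_le : ∀ t : CTree m, 3 * (2:ℚ) ^ dsm t ≤ 4 * rho t + 4 := by
  refine myInd (fun l ts ih => ?_)
  have hh := half_le_rho (node l ts)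
  match ts with
  | [] =>
    rw [dsm_nil, rho_node]
    split <;> norm_num
  | a :: ts =>
    rw [dsm_cons]
    split
    · rename_i h
      norm_num; linarith
    · rename_i h
      have hl0 : (l:ℕ) = 0 := by omega
      simp only
      set vals := (a::ts).map dsm with hvals
      set M := vals.foldr max 0 with hM
      have hMmem : M ∈ vals := by
        rcases foldr_max_cases vals with h0 | hmem
        · exfalso
          have h1 : dsm a ≤ M := le_foldr_max (by simp [hvals])
          have h2 := one_le_dsm a
          omega
        · exact hmem
      rw [rho_node, if_pos hl0]
      by_cases hcount : 2 ≤ vals.count M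
      · rw [if_pos hcount]
        have hst := sum_two (a::ts) ih hcount
        rw [pow_succ]
        linarith
      · rw [if_neg hcount]
        obtain ⟨t, ht, hval⟩ := List.mem_map.mp hMmem
        have h1 := ih t ht
        have h2 := rho_mem_le ht
        rw [← hval]
        linarith

end CTree
namespace CTree

def stoch (m : ℕ) (hm : 1 ≤ m) : CTree m := .node ⟨1, by omega⟩ []

def chainH (m : ℕ) (hm : 1 ≤ m) : ℕ → CTree m
  | 0 => stoch m hm
  | n+1 => .node 0 [chainH m hm n]

def chainR (m : ℕ) (hm : 1 ≤ m) : ℕ → CTree m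
  | 0 => stoch m hm
  | n+1 => .node 0 [chainR m hm n, stoch m hm]

def treeD (m : ℕ) (hm : 1 ≤ m) : ℕ → CTree m
  | 0 => stoch m hm
  | n+1 => .node 0 [treeD m hm n, treeD m hm n]

variable {m : ℕ} {hm : 1 ≤ m}

theorem fin_zero_val : ((0 : Fin (m+1)) : ℕ) = 0 := rfl

theorem rho_stoch : rho (stoch m hm) = 1/2 := by
  rw [stoch, rho_node]
  norm_num

theorem hs_stoch : hs (stoch m hm) = 1 := by
  rw [stoch, hs_node, if_pos (by exact Nat.zero_lt_one)]

theorem rs_stoch : rs (stoch m hm) = 1 := by rw [stoch, rs_nil]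

theorem dsm_stoch : dsm (stoch m hm) = 1 := by rw [stoch, dsm_nil]

theorem rho_chainH : ∀ n, rho (chainH m hm n) = n + 1/2
  | 0 => by rw [chainH, rho_stoch]; norm_num
  | n+1 => by
    rw [chainH, rho_node, if_pos fin_zero_val]
    simp [rho_chainH n]
    push_cast; ring

theorem hs_chainH : ∀ n, hs (chainH m hm n) = n + 1
  | 0 => by rw [chainH, hs_stoch]
  | n+1 => by
    rw [chainH, hs_node, if_neg (by rw [fin_zero_val]; omega)]
    simp [hs_chainH n]
    omega

theorem rho_chainR : ∀ n, rho (chainR m hm n) = (3*n+1)/2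
  | 0 => by rw [chainR, rho_stoch]; norm_num
  | n+1 => by
    rw [chainR, rho_node, if_pos fin_zero_val]
    simp [rho_chainR n, rho_stoch]
    push_cast; ring

theorem rs_chainR : ∀ n, rs (chainR m hm n) = n + 1
  | 0 => by rw [chainR, rs_stoch]
  | n+1 => by
    rw [chainR, rs_two, if_neg (by rw [fin_zero_val]; omega)]
    simp [rs_chainR n, rs_stoch]
    omega

theorem rho_treeD : ∀ n, rho (treeD m hm n) = 3 * 2^n / 2 - 1
  | 0 => by rw [treeD, rho_stoch]; norm_num
  | n+1 => by
    rw [treeD, rho_node, if_pos fin_zero_val]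
    simp [rho_treeD n]
    push_cast; ring

theorem dsm_treeD : ∀ n, dsm (treeD m hm n) = n + 1
  | 0 => by rw [treeD, dsm_stoch]
  | n+1 => by
    rw [treeD, dsm_cons, if_neg (by rw [fin_zero_val]; omega)]
    simp [dsm_treeD n]

end CTree
open CTree in
theorem stmt12 (m : ℕ) (hm : 1 ≤ m) (q : ℚ) (hq : 1/2 ≤ q) :
    IsGreatest {k : ℕ | ∃ τ : CTree m, rho τ ≤ q ∧ hs τ = k} (⌊q + 1/2⌋.toNat)
    ∧ IsGreatest {k : ℕ | ∃ τ : CTree m, rho τ ≤ q ∧ rs τ = k} (⌊(2 : ℚ)/3 * (q + 1)⌋.toNat)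
    ∧ IsGreatest {k : ℕ | ∃ τ : CTree m, rho τ ≤ q ∧ dsm τ = k}
        ((⌊Real.logb 2 (((q : ℝ) + 1) / 3)⌋ + 2).toNat) := by
  refine ⟨⟨?_, ?_⟩, ⟨?_, ?_⟩, ⟨?_, ?_⟩⟩
  · -- hs membership
    have h1 : 1 ≤ ⌊q + 1/2⌋ := Int.le_floor.mpr (by push_cast; linarith)
    set k := (⌊q + 1/2⌋).toNat with hk
    have hk1 : 1 ≤ k := by omega
    have hkq : (k : ℚ) ≤ q + 1/2 := by
      have := Int.floor_le (q + 1/2)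
      have hc : ((k : ℤ) : ℚ) = (k : ℚ) := by push_cast; ring
      rw [← hc]
      have : (k : ℤ) = ⌊q + 1/2⌋ := by omega
      rw [this]; exact Int.floor_le _
    refine ⟨chainH m hm (k-1), ?_, ?_⟩
    · rw [rho_chainH]
      have : ((k-1 : ℕ) : ℚ) = (k : ℚ) - 1 := by
        have : (1:ℕ) ≤ k := hk1
        push_cast [Nat.cast_sub hk1]; ring
      rw [this]; linarith
    · rw [hs_chainH]; omega
  · -- hs upper bound
    rintro k' ⟨τ, hρ, rfl⟩
    have h1 := hs_le τ
    have h2 : ((hs τ : ℤ) : ℚ) ≤ q + 1/2 := by push_cast; linarith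
    have h3 : (hs τ : ℤ) ≤ ⌊q + 1/2⌋ := Int.le_floor.mpr h2
    omega
  · -- rs membership
    have h1 : 1 ≤ ⌊(2:ℚ)/3 * (q + 1)⌋ := Int.le_floor.mpr (by push_cast; linarith)
    set k := (⌊(2:ℚ)/3 * (q + 1)⌋).toNat with hk
    have hk1 : 1 ≤ k := by omega
    have hkq : (k : ℚ) ≤ 2/3 * (q + 1) := by
      have hc : ((k : ℤ) : ℚ) = (k : ℚ) := by push_cast; ring
      rw [← hc]
      have : (k : ℤ) = ⌊(2:ℚ)/3 * (q + 1)⌋ := by omega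
      rw [this]; exact Int.floor_le _
    refine ⟨chainR m hm (k-1), ?_, ?_⟩
    · rw [rho_chainR]
      have h2 : ((k-1 : ℕ) : ℚ) = (k : ℚ) - 1 := by push_cast [Nat.cast_sub hk1]; ring
      rw [h2]; linarith
    · rw [rs_chainR]; omega
  · -- rs upper bound
    rintro k' ⟨τ, hρ, rfl⟩
    have h1 := rs_le τ
    have h2 : ((rs τ : ℤ) : ℚ) ≤ 2/3 * (q + 1) := by push_cast; linarith
    have h3 : (rs τ : ℤ) ≤ ⌊(2:ℚ)/3 * (q + 1)⌋ := Int.le_floor.mpr h2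
    omega
  · -- dsm membership
    have hx : (0:ℝ) < ((q:ℝ) + 1) / 3 := by
      have : (1:ℝ)/2 ≤ (q:ℝ) := by
        have h := (Rat.cast_le (K := ℝ)).mpr hq
        push_cast at h
        linarith
      linarith
    set L := ⌊Real.logb 2 (((q : ℝ) + 1) / 3)⌋ with hL
    have hL1 : -1 ≤ L := by
      apply Int.le_floor.mpr
      rw [Real.le_logb_iff_rpow_le one_lt_two hx]
      have h2 : ((-1 : ℤ) : ℝ) = (-1 : ℝ) := by push_cast; ring
      rw [h2, Real.rpow_neg_one]
      have : (1:ℝ)/2 ≤ (q:ℝ) := by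
        have h := (Rat.cast_le (K := ℝ)).mpr hq
        push_cast at h
        linarith
      rw [inv_eq_one_div]
      linarith
    set k := (L + 2).toNat with hk
    have hk1 : 1 ≤ k := by omega
    refine ⟨treeD m hm (k-1), ?_, ?_⟩
    · rw [rho_treeD]
      rcases Nat.lt_or_ge k 2 with hk2 | hk2
      · -- k = 1
        have : k = 1 := by omega
        rw [this]
        norm_num
        linarith
      · -- k ≥ 2, L ≥ 0
        have hL0 : 0 ≤ L := by omega
        have hkL : (k : ℤ) = L + 2 := by omega
        have hfl : ((L:ℝ)) ≤ Real.logb 2 (((q : ℝ) + 1) / 3) := Int.floor_le _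
        have hpow : (2:ℝ) ^ ((L:ℤ):ℝ) ≤ ((q : ℝ) + 1) / 3 :=
          (Real.le_logb_iff_rpow_le one_lt_two hx).mp hfl
        set a := L.toNat with ha
        have haL : (a : ℤ) = L := Int.toNat_of_nonneg hL0
        have hcast : ((L:ℤ):ℝ) = ((a:ℕ):ℝ) := by rw [← haL]; push_cast; ring
        rw [hcast, Real.rpow_natCast] at hpow
        have hq2 : (2:ℚ) ^ a ≤ ((q:ℚ) + 1) / 3 := by
          have : (((2:ℚ) ^ a : ℚ) : ℝ) ≤ ((((q:ℚ) + 1) / 3 : ℚ) : ℝ) := by push_cast; exact hpow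
          exact_mod_cast this
        have hka : k - 1 = a + 1 := by omega
        rw [hka, pow_succ]
        linarith
    · rw [dsm_treeD]; omega
  · -- dsm upper bound
    rintro k' ⟨τ, hρ, rfl⟩
    have hx : (0:ℝ) < ((q:ℝ) + 1) / 3 := by
      have : (1:ℝ)/2 ≤ (q:ℝ) := by
        have h := (Rat.cast_le (K := ℝ)).mpr hq
        push_cast at h
        linarith
      linarith
    have h1 := dsm_le τ
    have h2 : (2:ℚ) ^ dsm τ ≤ 4 * (q + 1) / 3 := by linarith
    have h3 : (2:ℝ) ^ dsm τ ≤ 4 * ((q:ℝ) + 1) / 3 := by exact_mod_cast h2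
    have h4 : (2:ℝ) ^ (((dsm τ : ℤ) - 2 : ℤ) : ℝ) ≤ ((q:ℝ) + 1) / 3 := by
      have e1 : ((((dsm τ : ℤ) - 2 : ℤ)) : ℝ) = ((dsm τ : ℕ) : ℝ) - 2 := by push_cast; ring
      rw [e1, Real.rpow_sub two_pos, Real.rpow_natCast]
      have e2 : (2:ℝ) ^ (2:ℝ) = 4 := by
        rw [show (2:ℝ) = ((2:ℕ):ℝ) from by norm_num, Real.rpow_natCast]
        norm_num
      rw [e2]
      linarith
    have h5 : ((dsm τ : ℤ) - 2 : ℤ) ≤ ⌊Real.logb 2 (((q : ℝ) + 1) / 3)⌋ := by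
      apply Int.le_floor.mpr
      rw [Real.le_logb_iff_rpow_le one_lt_two hx]
      exact h4
    omega
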